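/- Let F be the free Lie ring over ℤ on a set X, let R be a Lie ideal of F, and let 𝔯 be the two-sided ideal of U(F) generated by ι(R). If f ∈ F satisfies ι(f) ∈ ϖ(F)^n + 𝔯 for some n ≥ 1, then there exists f' ∈ F with ι(f') ∈ ϖ(F)^n + ϖ(F)·𝔯 and f' − f ∈ R. -/

import Mathlib

open UniversalEnvelopingAlgebra LieModule

attribute [local instance 100] LieRing.ofAssociativeRing

/-- The two-sided ideal (as a ℤ-submodule) of a ring `U` generated by a set `s`. -/
def twoSidedSpan (U : Type*) [Ring U] (s : Set U) : Submodule ℤ U :=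
  ⊤ * Submodule.span ℤ s * ⊤

/-- The augmentation ideal `ϖ(L)` of the universal enveloping algebra of a Lie ring `L`,
i.e. the two-sided ideal of `𝒰(L)` generated by the image of the canonical map `ι : L → 𝒰(L)`. -/
noncomputable def aug (L : Type*) [LieRing L] [LieAlgebra ℤ L] :
    Submodule ℤ (UniversalEnvelopingAlgebra ℤ L) :=
  twoSidedSpan _ (Set.range (ι ℤ : L →ₗ⁅ℤ⁆ UniversalEnvelopingAlgebra ℤ L))

section Aux

variable {L : Type*} [LieRing L] [LieAlgebra ℤ L]

/-- Induction principle for the universal enveloping algebra. -/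
theorem uea_induction {C : UniversalEnvelopingAlgebra ℤ L → Prop}
    (halg : ∀ z : ℤ, C (algebraMap ℤ _ z)) (hι : ∀ x : L, C (ι ℤ x))
    (hmul : ∀ a b, C a → C b → C (a * b)) (hadd : ∀ a b, C a → C b → C (a + b))
    (a : UniversalEnvelopingAlgebra ℤ L) : C a := by
  obtain ⟨t, rfl⟩ := RingCon.mkₐ_surjective (α := ℤ) (UniversalEnvelopingAlgebra.ringCon ℤ L) a
  induction t using TensorAlgebra.induction with
  | algebraMap z => rw [AlgHom.commutes]; exact halg z
  | ι x => exact hι x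
  | mul a b ha hb => rw [map_mul]; exact hmul _ _ ha hb
  | add a b ha hb => rw [map_add]; exact hadd _ _ ha hb

theorem ι_mul_ι (x y : L) : ι ℤ x * ι ℤ y = ι ℤ y * ι ℤ x + ι ℤ ⁅x, y⁆ := by
  have := (ι ℤ : L →ₗ⁅ℤ⁆ UniversalEnvelopingAlgebra ℤ L).map_lie x y
  rw [Ring.lie_def] at this
  rw [this]; abel

theorem top_mul_top :
    (⊤ : Submodule ℤ (UniversalEnvelopingAlgebra ℤ L)) * ⊤ = ⊤ := by
  refine le_antisymm le_top fun u _ => ?_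
  simpa using Submodule.mul_mem_mul (Submodule.mem_top (x := u))
    (Submodule.mem_top (x := (1 : UniversalEnvelopingAlgebra ℤ L)))

theorem le_top_mul (S : Submodule ℤ (UniversalEnvelopingAlgebra ℤ L)) : S ≤ ⊤ * S := by
  intro s hs
  simpa using Submodule.mul_mem_mul
    (Submodule.mem_top (x := (1 : UniversalEnvelopingAlgebra ℤ L))) hs

theorem le_mul_top (S : Submodule ℤ (UniversalEnvelopingAlgebra ℤ L)) : S ≤ S * ⊤ := by
  intro s hs
  simpa using Submodule.mul_mem_mul hs
    (Submodule.mem_top (x := (1 : UniversalEnvelopingAlgebra ℤ L)))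

variable (R : LieIdeal ℤ L)

local notation "S" => Submodule.span ℤ
  ((ι ℤ : L →ₗ⁅ℤ⁆ UniversalEnvelopingAlgebra ℤ L) '' (R : Set L))

theorem span_mul_ι_le (y : L) :
    ∀ s ∈ S, s * ι ℤ y ∈ (⊤ : Submodule ℤ (UniversalEnvelopingAlgebra ℤ L)) * S := by
  intro s hs
  induction hs using Submodule.span_induction with
  | mem x hx =>
    obtain ⟨r, hr, rfl⟩ := hx
    rw [ι_mul_ι]
    refine add_mem (Submodule.mul_mem_mul Submodule.mem_top
      (Submodule.subset_span ⟨r, hr, rfl⟩)) (le_top_mul S ?_)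
    exact Submodule.subset_span ⟨⁅r, y⁆, lie_mem_left ℤ L R r y hr, rfl⟩
  | zero => simpa using Submodule.zero_mem _
  | add a b _ _ ha hb => rw [add_mul]; exact add_mem ha hb
  | smul z a _ ha => rw [smul_mul_assoc]; exact Submodule.smul_mem _ z ha

theorem top_mul_span_mul_top_le :
    ((⊤ : Submodule ℤ (UniversalEnvelopingAlgebra ℤ L)) * S) * ⊤ ≤ ⊤ * S := by
  refine Submodule.mul_le.2 fun m hm u hu => ?_
  clear hu
  revert m
  induction u using uea_induction with
  | halg z =>
    intro m hm
    rw [← Algebra.commutes, ← Algebra.smul_def]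
    exact Submodule.smul_mem _ z hm
  | hι y =>
    intro m hm
    refine Submodule.mul_induction_on hm (fun c _ s hs => ?_) (fun a b ha hb => ?_)
    · rw [mul_assoc]
      have := Submodule.mul_mem_mul (Submodule.mem_top (x := c)) (span_mul_ι_le R y s hs)
      rw [← mul_assoc, top_mul_top] at this
      exact this
    · rw [add_mul]; exact add_mem ha hb
  | hmul a b ha hb => intro m hm; rw [← mul_assoc]; exact hb (m * a) (ha m hm)
  | hadd a b ha hb => intro m hm; rw [mul_add]; exact add_mem (ha m hm) (hb m hm)

theorem top_le_span_one_sup_aug :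
    (⊤ : Submodule ℤ (UniversalEnvelopingAlgebra ℤ L)) ≤
      Submodule.span ℤ {(1 : UniversalEnvelopingAlgebra ℤ L)} ⊔ aug L := by
  have haug_l : (⊤ : Submodule ℤ (UniversalEnvelopingAlgebra ℤ L)) * aug L ≤ aug L := by
    unfold aug twoSidedSpan
    set T := Submodule.span ℤ (Set.range (ι ℤ : L →ₗ⁅ℤ⁆ UniversalEnvelopingAlgebra ℤ L))
    rw [mul_assoc ⊤ T ⊤, ← mul_assoc ⊤ ⊤ (T * ⊤), top_mul_top]
  have haug_r : aug L * (⊤ : Submodule ℤ (UniversalEnvelopingAlgebra ℤ L)) ≤ aug L := by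
    unfold aug twoSidedSpan
    set T := Submodule.span ℤ (Set.range (ι ℤ : L →ₗ⁅ℤ⁆ UniversalEnvelopingAlgebra ℤ L))
    rw [mul_assoc (⊤ * T) ⊤ ⊤, top_mul_top]
  intro u hu
  clear hu
  induction u using uea_induction with
  | halg z =>
    apply Submodule.mem_sup_left
    rw [Algebra.algebraMap_eq_smul_one]
    exact Submodule.smul_mem _ z (Submodule.mem_span_singleton_self 1)
  | hι x =>
    apply Submodule.mem_sup_right
    unfold aug twoSidedSpan
    refine le_mul_top _ (le_top_mul _ (Submodule.subset_span ⟨x, rfl⟩))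
  | hmul a b ha hb =>
    obtain ⟨p, hp, q, hq, rfl⟩ := Submodule.mem_sup.1 ha
    obtain ⟨p', hp', q', hq', rfl⟩ := Submodule.mem_sup.1 hb
    have h1 : (p + q) * (p' + q') = p * p' + (p * q' + q * (p' + q')) := by
      rw [add_mul, mul_add p p' q', add_assoc]
    rw [h1]
    refine add_mem ?_ (Submodule.mem_sup_right (add_mem ?_ ?_))
    · obtain ⟨z, rfl⟩ := Submodule.mem_span_singleton.1 hp
      obtain ⟨z', rfl⟩ := Submodule.mem_span_singleton.1 hp'
      apply Submodule.mem_sup_left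
      rw [Submodule.mem_span_singleton]
      exact ⟨z * z', by rw [smul_mul_assoc, mul_smul_comm, mul_one, mul_smul]⟩
    · exact haug_l (Submodule.mul_mem_mul Submodule.mem_top hq')
    · exact haug_r (Submodule.mul_mem_mul hq Submodule.mem_top)
  | hadd a b ha hb => exact add_mem ha hb

/-- the key decomposition of the ideal generated by `ι(R)`. -/
theorem rIdeal_le :
    twoSidedSpan _ ((ι ℤ : L →ₗ⁅ℤ⁆ UniversalEnvelopingAlgebra ℤ L) '' (R : Set L)) ≤
      S ⊔ aug L * twoSidedSpan _
        ((ι ℤ : L →ₗ⁅ℤ⁆ UniversalEnvelopingAlgebra ℤ L) '' (R : Set L)) := by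
  set 𝔯 := twoSidedSpan _ ((ι ℤ : L →ₗ⁅ℤ⁆ UniversalEnvelopingAlgebra ℤ L) '' (R : Set L))
  have hS𝔯 : S ≤ 𝔯 := fun s hs => le_mul_top _ (le_top_mul _ hs)
  refine le_trans (top_mul_span_mul_top_le R) ?_
  refine Submodule.mul_le.2 fun c _ s hs => ?_
  obtain ⟨p, hp, q, hq, rfl⟩ := Submodule.mem_sup.1 (top_le_span_one_sup_aug (Submodule.mem_top (x := c)))
  rw [add_mul]
  refine add_mem (Submodule.mem_sup_left ?_) (Submodule.mem_sup_right ?_)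
  · obtain ⟨z, rfl⟩ := Submodule.mem_span_singleton.1 hp
    rw [smul_mul_assoc, one_mul]
    exact Submodule.smul_mem _ z hs
  · exact Submodule.mul_mem_mul hq (hS𝔯 hs)

theorem mem_span_image_iff {t : UniversalEnvelopingAlgebra ℤ L} (ht : t ∈ S) :
    ∃ r ∈ R, ι ℤ r = t := by
  induction ht using Submodule.span_induction with
  | mem x hx => obtain ⟨r, hr, rfl⟩ := hx; exact ⟨r, hr, rfl⟩
  | zero => exact ⟨0, zero_mem R, map_zero _⟩
  | add a b _ _ ha hb =>
    obtain ⟨r, hr, rfl⟩ := ha; obtain ⟨r', hr', rfl⟩ := hb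
    exact ⟨r + r', add_mem hr hr', map_add _ _ _⟩
  | smul z a _ ha =>
    obtain ⟨r, hr, rfl⟩ := ha
    refine ⟨z • r, zsmul_mem hr z, ?_⟩
    show (ι ℤ : L →ₗ⁅ℤ⁆ UniversalEnvelopingAlgebra ℤ L).toLinearMap (z • r)
      = z • (ι ℤ : L →ₗ⁅ℤ⁆ UniversalEnvelopingAlgebra ℤ L).toLinearMap r
    exact map_zsmul _ z r

end Aux

/-- Let `F` be the free Lie ring over ℤ on a set `X`, `R` a Lie ideal of `F`, and `𝔯` the
two-sided ideal of `𝒰(F)` generated by `ι(R)`.  If `f ∈ F` satisfies `ι f ∈ ϖ(F)^n + 𝔯` for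
some `n ≥ 1`, then there exists `f' ∈ F` with `ι f' ∈ ϖ(F)^n + ϖ(F)·𝔯` and `f' - f ∈ R`. -/
theorem exists_congr_mod_R (X : Type*) (R : LieIdeal ℤ (FreeLieAlgebra ℤ X))
    (n : ℕ) (hn : 1 ≤ n) (f : FreeLieAlgebra ℤ X)
    (hf : ι ℤ f ∈ (aug (FreeLieAlgebra ℤ X)) ^ n
      ⊔ twoSidedSpan _ ((ι ℤ : FreeLieAlgebra ℤ X →ₗ⁅ℤ⁆ _) '' (R : Set (FreeLieAlgebra ℤ X)))) :
    ∃ f' : FreeLieAlgebra ℤ X,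
      ι ℤ f' ∈ (aug (FreeLieAlgebra ℤ X)) ^ n
          ⊔ aug (FreeLieAlgebra ℤ X)
            * twoSidedSpan _
                ((ι ℤ : FreeLieAlgebra ℤ X →ₗ⁅ℤ⁆ _) '' (R : Set (FreeLieAlgebra ℤ X)))
        ∧ f' - f ∈ R := by
  obtain ⟨a, ha, b, hb, hab⟩ := Submodule.mem_sup.1 hf
  obtain ⟨s, hs, v, hv, hsv⟩ := Submodule.mem_sup.1 (rIdeal_le R hb)
  obtain ⟨r, hr, hrs⟩ := mem_span_image_iff R hs
  refine ⟨f - r, ?_, ?_⟩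
  · have : ι ℤ (f - r) = a + v := by
      rw [map_sub, ← hab, ← hsv, hrs]; abel
    rw [this]
    exact Submodule.add_mem_sup ha hv
  · simpa using neg_mem hr
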